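/- Let G be a finite simple graph admitting a barbell partition and let v be a vertex of G. Then the graph jdup(G, v), obtained from G by adding a new vertex u adjacent to v and to all neighbors of v, admits a barbell partition. -/

import Mathlib

open SimpleGraph

/-- A barbell partition of a graph `G`: a partition of the vertex set into
`R`, `W1`, `W2` with `W1, W2` nonempty, no edges between `W1` and `W2`, and
every vertex of `R` has a number of neighbors in each `Wi` different from 1. -/
def IsBarbellPartition {V : Type*} (G : SimpleGraph V) (R W1 W2 : Set V) : Prop :=
  R ∪ W1 ∪ W2 = Set.univ ∧ Disjoint R W1 ∧ Disjoint R W2 ∧ Disjoint W1 W2 ∧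
  W1.Nonempty ∧ W2.Nonempty ∧
  (∀ w1 ∈ W1, ∀ w2 ∈ W2, ¬ G.Adj w1 w2) ∧
  (∀ v ∈ R, (G.neighborSet v ∩ W1).ncard ≠ 1 ∧ (G.neighborSet v ∩ W2).ncard ≠ 1)

/-- `G` admits a barbell partition. -/
def HasBarbellPartition {V : Type*} (G : SimpleGraph V) : Prop :=
  ∃ R W1 W2 : Set V, IsBarbellPartition G R W1 W2

/-- A fort of `G`: a nonempty vertex set `F` such that no vertex outside `F`
has exactly one neighbor in `F`. -/
def IsFort {V : Type*} (G : SimpleGraph V) (F : Set V) : Prop :=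
  F.Nonempty ∧ ∀ v ∉ F, (G.neighborSet v ∩ F).ncard ≠ 1

/-- `dup G v`: duplicate the vertex `v` of `G` without an edge; the new vertex
`none` is adjacent exactly to the neighbors of `v`. -/
def dup {V : Type*} (G : SimpleGraph V) (v : V) : SimpleGraph (Option V) where
  Adj x y :=
    match x, y with
    | some a, some b => G.Adj a b
    | some a, none => G.Adj v a
    | none, some a => G.Adj v a
    | none, none => False
  symm := by
    constructor
    rintro (_ | a) (_ | b) h
    · exact h
    · exact h
    · exact h
    · exact h.symm
  loopless := by
    constructor
    rintro (_ | a) h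
    · exact h
    · exact G.irrefl h

/-- `jdup G v`: duplicate the vertex `v` of `G` with an edge; the new vertex
`none` is adjacent to `v` and to all neighbors of `v`. -/
def jdup {V : Type*} (G : SimpleGraph V) (v : V) : SimpleGraph (Option V) where
  Adj x y :=
    match x, y with
    | some a, some b => G.Adj a b
    | some a, none => G.Adj v a ∨ a = v
    | none, some a => G.Adj v a ∨ a = v
    | none, none => False
  symm := by
    constructor
    rintro (_ | a) (_ | b) h
    · exact h
    · exact h
    · exact h
    · exact h.symm
  loopless := by
    constructor
    rintro (_ | a) h
    · exact h
    · exact G.irrefl h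

section Aux

variable {V : Type*} {G : SimpleGraph V} {v : V}

lemma ncard_ne_one_of_two {α : Type*} {s : Set α} {x y : α} (hx : x ∈ s) (hy : y ∈ s)
    (hxy : x ≠ y) : s.ncard ≠ 1 := by
  intro h
  obtain ⟨a, ha⟩ := Set.ncard_eq_one.mp h
  subst ha
  simp only [Set.mem_singleton_iff] at hx hy
  exact hxy (hx.trans hy.symm)

lemma jdup_adj_ss {a b : V} : (jdup G v).Adj (some a) (some b) ↔ G.Adj a b := Iff.rfl
lemma jdup_adj_sn {a : V} : (jdup G v).Adj (some a) none ↔ (G.Adj v a ∨ a = v) := Iff.rfl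
lemma jdup_adj_ns {a : V} : (jdup G v).Adj none (some a) ↔ (G.Adj v a ∨ a = v) := Iff.rfl

lemma inter_image_some (a : V) (S : Set V) :
    (jdup G v).neighborSet (some a) ∩ (Option.some '' S)
      = Option.some '' (G.neighborSet a ∩ S) := by
  ext x
  cases x with
  | none => simp
  | some b =>
    simp only [Set.mem_inter_iff, mem_neighborSet, Set.mem_image, Option.some.injEq]
    constructor
    · rintro ⟨hadj, c, hc, rfl⟩
      exact ⟨c, ⟨hadj, hc⟩, rfl⟩
    · rintro ⟨c, ⟨h1, h2⟩, hc⟩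
      subst hc
      exact ⟨h1, c, h2, rfl⟩

lemma inter_image_none (S : Set V) (hvS : v ∉ S) :
    (jdup G v).neighborSet none ∩ (Option.some '' S)
      = Option.some '' (G.neighborSet v ∩ S) := by
  ext x
  cases x with
  | none => simp [mem_neighborSet]
  | some b =>
    simp only [Set.mem_inter_iff, mem_neighborSet, Set.mem_image, Option.some.injEq]
    constructor
    · rintro ⟨hadj, c, hc, rfl⟩
      rcases (jdup_adj_ns).mp hadj with h | rfl
      · exact ⟨c, ⟨h, hc⟩, rfl⟩
      · exact absurd hc hvS
    · rintro ⟨c, ⟨h1, h2⟩, hc⟩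
      subst hc
      exact ⟨Or.inl h1, c, h2, rfl⟩

lemma inter_insert_some (a : V) (S : Set V) (hna : ¬ G.Adj v a) (hav : a ≠ v) :
    (jdup G v).neighborSet (some a) ∩ insert none (Option.some '' S)
      = Option.some '' (G.neighborSet a ∩ S) := by
  have h1 : (jdup G v).neighborSet (some a) ∩ insert none (Option.some '' S)
      = ((jdup G v).neighborSet (some a) ∩ {none})
        ∪ ((jdup G v).neighborSet (some a) ∩ (Option.some '' S)) := by
    rw [Set.insert_eq, Set.inter_union_distrib_left]
  have h2 : (jdup G v).neighborSet (some a) ∩ ({none} : Set (Option V)) = ∅ := by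
    ext x
    simp only [Set.mem_inter_iff, mem_neighborSet, Set.mem_singleton_iff, Set.mem_empty_iff_false,
      iff_false, not_and]
    rintro hadj rfl
    rcases (jdup_adj_sn).mp hadj with h | h
    · exact hna h
    · exact hav h
  rw [h1, h2, Set.empty_union, inter_image_some]

lemma ncard_image_some (S : Set V) : (Option.some '' S).ncard = S.ncard :=
  Set.ncard_image_of_injective _ (Option.some_injective V)

lemma IsBarbellPartition.symm {R W1 W2 : Set V} (h : IsBarbellPartition G R W1 W2) :
    IsBarbellPartition G R W2 W1 := by
  obtain ⟨hU, hRW1, hRW2, hW12, hW1, hW2, hadj, hcnt⟩ := h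
  refine ⟨by rw [← hU]; ext x; simp; tauto, hRW2, hRW1, hW12.symm, hW2, hW1,
    fun w2 h2 w1 h1 ha => hadj w1 h1 w2 h2 ha.symm, fun r hr => ⟨(hcnt r hr).2, (hcnt r hr).1⟩⟩

lemma jdup_aux_W1 {R W1 W2 : Set V} (hv : v ∈ W1) (h : IsBarbellPartition G R W1 W2) :
    HasBarbellPartition (jdup G v) := by
  obtain ⟨hU, hRW1, hRW2, hW12, hW1, hW2, hadj, hcnt⟩ := h
  refine ⟨Option.some '' R, insert none (Option.some '' W1), Option.some '' W2,
    ?_, ?_, ?_, ?_, ?_, ?_, ?_, ?_⟩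
  · ext x
    cases x with
    | none => simp
    | some a =>
      have : a ∈ R ∪ W1 ∪ W2 := hU ▸ Set.mem_univ a
      simp only [Set.mem_union] at this
      simp only [Set.mem_union, Set.mem_insert_iff, Set.mem_image, Option.some.injEq,
        Set.mem_univ, iff_true]
      rcases this with (h | h) | h
      · exact Or.inl (Or.inl ⟨a, h, rfl⟩)
      · exact Or.inl (Or.inr (Or.inr ⟨a, h, rfl⟩))
      · exact Or.inr ⟨a, h, rfl⟩
  · rw [Set.disjoint_left]
    rintro x ⟨a, ha, rfl⟩ hx
    rcases hx with h | ⟨b, hb, hba⟩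
    · exact nomatch h
    · cases hba; exact hRW1.le_bot ⟨ha, hb⟩
  · rw [Set.disjoint_left]
    rintro x ⟨a, ha, rfl⟩ ⟨b, hb, hba⟩
    cases hba; exact hRW2.le_bot ⟨ha, hb⟩
  · rw [Set.disjoint_left]
    rintro x hx ⟨b, hb, rfl⟩
    rcases hx with h | ⟨a, ha, hab⟩
    · exact nomatch h
    · cases hab; exact hW12.le_bot ⟨ha, hb⟩
  · exact ⟨none, Or.inl rfl⟩
  · obtain ⟨w, hw⟩ := hW2; exact ⟨some w, w, hw, rfl⟩
  · rintro x hx y ⟨b, hb, rfl⟩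
    rcases hx with rfl | ⟨a, ha, rfl⟩
    · intro hadj'
      rcases (jdup_adj_ns).mp hadj' with h | rfl
      · exact hadj v hv b hb h
      · exact hW12.le_bot ⟨hv, hb⟩
    · exact hadj a ha b hb
  · rintro x ⟨r, hr, rfl⟩
    have hrv : r ≠ v := fun h => hRW1.le_bot ⟨h ▸ hr, hv⟩
    constructor
    · by_cases hav : G.Adj v r
      · refine ncard_ne_one_of_two (x := (none : Option V)) (y := some v) ?_ ?_ (by simp)
        · exact ⟨(jdup_adj_sn).mpr (Or.inl hav), Or.inl rfl⟩
        · exact ⟨(jdup_adj_ss (v := v)).mpr hav.symm, Or.inr ⟨v, hv, rfl⟩⟩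
      · rw [inter_insert_some r W1 hav hrv, ncard_image_some]
        exact (hcnt r hr).1
    · rw [inter_image_some, ncard_image_some]
      exact (hcnt r hr).2

lemma jdup_aux_R {R W1 W2 : Set V} (hv : v ∈ R) (h : IsBarbellPartition G R W1 W2) :
    HasBarbellPartition (jdup G v) := by
  obtain ⟨hU, hRW1, hRW2, hW12, hW1, hW2, hadj, hcnt⟩ := h
  refine ⟨insert none (Option.some '' R), Option.some '' W1, Option.some '' W2,
    ?_, ?_, ?_, ?_, ?_, ?_, ?_, ?_⟩
  · ext x
    cases x with
    | none => simp
    | some a =>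
      have : a ∈ R ∪ W1 ∪ W2 := hU ▸ Set.mem_univ a
      simp only [Set.mem_union] at this
      simp only [Set.mem_union, Set.mem_insert_iff, Set.mem_image, Option.some.injEq,
        Set.mem_univ, iff_true]
      rcases this with (h | h) | h
      · exact Or.inl (Or.inl (Or.inr ⟨a, h, rfl⟩))
      · exact Or.inl (Or.inr ⟨a, h, rfl⟩)
      · exact Or.inr ⟨a, h, rfl⟩
  · rw [Set.disjoint_left]
    rintro x hx ⟨b, hb, rfl⟩
    rcases hx with h | ⟨a, ha, hab⟩
    · exact nomatch h
    · cases hab; exact hRW1.le_bot ⟨ha, hb⟩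
  · rw [Set.disjoint_left]
    rintro x hx ⟨b, hb, rfl⟩
    rcases hx with h | ⟨a, ha, hab⟩
    · exact nomatch h
    · cases hab; exact hRW2.le_bot ⟨ha, hb⟩
  · rw [Set.disjoint_left]
    rintro x ⟨a, ha, rfl⟩ ⟨b, hb, hba⟩
    cases hba; exact hW12.le_bot ⟨ha, hb⟩
  · obtain ⟨w, hw⟩ := hW1; exact ⟨some w, w, hw, rfl⟩
  · obtain ⟨w, hw⟩ := hW2; exact ⟨some w, w, hw, rfl⟩
  · rintro x ⟨a, ha, rfl⟩ y ⟨b, hb, rfl⟩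
    exact hadj a ha b hb
  · rintro x hx
    rcases hx with rfl | ⟨r, hr, rfl⟩
    · constructor
      · rw [inter_image_none W1 (fun hc => hRW1.le_bot ⟨hv, hc⟩), ncard_image_some]
        exact (hcnt v hv).1
      · rw [inter_image_none W2 (fun hc => hRW2.le_bot ⟨hv, hc⟩), ncard_image_some]
        exact (hcnt v hv).2
    · constructor
      · rw [inter_image_some, ncard_image_some]
        exact (hcnt r hr).1
      · rw [inter_image_some, ncard_image_some]
        exact (hcnt r hr).2

end Aux

/-- If `G` admits a barbell partition, then join-duplicating any vertex yields a
graph admitting a barbell partition. -/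
theorem jdup_hasBarbellPartition {V : Type*} [Fintype V] (G : SimpleGraph V) (v : V)
    (h : HasBarbellPartition G) : HasBarbellPartition (jdup G v) := by
  obtain ⟨R, W1, W2, hp⟩ := h
  have hv : v ∈ R ∪ W1 ∪ W2 := hp.1 ▸ Set.mem_univ v
  rcases hv with (hv | hv) | hv
  · exact jdup_aux_R hv hp
  · exact jdup_aux_W1 hv hp
  · exact jdup_aux_W1 hv hp.symm
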